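/- Let G = (V, E) be a finite graph, φ ∈ [0,1], and let S₁ ⊆ V be a cut with |E(S₁, V∖S₁)| ≤ φ·Vol(S₁), and let S₂ ⊆ V∖S₁ be a cut in the induced graph G∖S₁ (with self-loops preserving degrees) with |E(S₂, (V∖S₁)∖S₂)| ≤ φ·Vol(S₂). If Vol(S₁ ∪ S₂) ≤ (1/2)·Vol(V), then |E(S₁ ∪ S₂, V∖(S₁∪S₂))| ≤ φ·Vol(S₁ ∪ S₂), i.e., S₁ ∪ S₂ is a φ-sparse cut in G. -/
import Mathlib


open Finset

/-- The number of edges of `G` between disjoint vertex sets `A` and `B`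
(each crossing edge counted once, as an ordered pair in `A × B`). -/
def edgesBetween {V : Type*} [Fintype V] [DecidableEq V] (G : SimpleGraph V)
    [DecidableRel G.Adj] (A B : Finset V) : ℕ :=
  ((A ×ˢ B).filter (fun p => G.Adj p.1 p.2)).card

/-- The volume of a vertex set: the sum of the degrees (in `G`) of its vertices. -/
def vol {V : Type*} [Fintype V] (G : SimpleGraph V) [DecidableRel G.Adj]
    (S : Finset V) : ℝ :=
  ∑ v ∈ S, (G.degree v : ℝ)

lemma edgesBetween_union_left {V : Type*} [Fintype V] [DecidableEq V] (G : SimpleGraph V)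
    [DecidableRel G.Adj] (A B C : Finset V) (h : Disjoint A B) :
    edgesBetween G (A ∪ B) C = edgesBetween G A C + edgesBetween G B C := by
  unfold edgesBetween
  rw [union_product, filter_union, card_union_of_disjoint]
  apply Finset.disjoint_filter_filter
  rw [Finset.disjoint_left]
  rintro ⟨a,b⟩ hab hab'
  simp only [Finset.mem_product] at hab hab'
  exact (Finset.disjoint_left.mp h) hab.1 hab'.1

lemma edgesBetween_mono_right {V : Type*} [Fintype V] [DecidableEq V] (G : SimpleGraph V)
    [DecidableRel G.Adj] (A : Finset V) {B C : Finset V} (h : B ⊆ C) :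
    edgesBetween G A B ≤ edgesBetween G A C :=
  card_le_card (filter_subset_filter _ (product_subset_product_right h))

theorem stmt_4 {V : Type*} [Fintype V] [DecidableEq V] (G : SimpleGraph V)
    [DecidableRel G.Adj] (φ : ℝ) (hφ : φ ∈ Set.Icc (0 : ℝ) 1)
    (S₁ S₂ : Finset V) (hS₂ : S₂ ⊆ S₁ᶜ)
    (h₁ : (edgesBetween G S₁ S₁ᶜ : ℝ) ≤ φ * vol G S₁)
    (h₂ : (edgesBetween G S₂ (S₁ᶜ \ S₂) : ℝ) ≤ φ * vol G S₂)
    (hvol : vol G (S₁ ∪ S₂) ≤ (1 / 2) * vol G Finset.univ) :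
    (edgesBetween G (S₁ ∪ S₂) (S₁ ∪ S₂)ᶜ : ℝ) ≤ φ * vol G (S₁ ∪ S₂) := by
  have hdisj : Disjoint S₁ S₂ := by
    rw [Finset.disjoint_left]
    intro a ha ha2
    exact (Finset.mem_compl.mp (hS₂ ha2)) ha
  have hcompl : (S₁ ∪ S₂)ᶜ = S₁ᶜ \ S₂ := by
    ext x
    simp [Finset.mem_compl, Finset.mem_sdiff, and_comm, not_or]
  have hvolu : vol G (S₁ ∪ S₂) = vol G S₁ + vol G S₂ := by
    unfold vol; exact Finset.sum_union hdisj
  have hsplit : edgesBetween G (S₁ ∪ S₂) (S₁ ∪ S₂)ᶜ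
      = edgesBetween G S₁ (S₁ᶜ \ S₂) + edgesBetween G S₂ (S₁ᶜ \ S₂) := by
    rw [hcompl, edgesBetween_union_left G S₁ S₂ _ hdisj]
  have hmono : (edgesBetween G S₁ (S₁ᶜ \ S₂) : ℝ) ≤ edgesBetween G S₁ S₁ᶜ := by
    exact_mod_cast edgesBetween_mono_right G S₁ (Finset.sdiff_subset)
  rw [hsplit, hvolu]
  push_cast
  linarith
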